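/- Let N be a natural number and p a real number with 1 < p < N. Let g : ℝ → ℝ≥0∞ be measurable. Then for every r > 1: ∫_{(1,r)} s^(p−1)·g(s) ds ≤ (∫_{(1,∞)} s^(N−1)·g(s)^(N/p) ds)^(p/N) · (log r)^((N−p)/N), where all integrals are Lebesgue integrals with values in the extended nonnegative reals ℝ≥0∞ and all real exponents are extended-real rpow. -/

import Mathlib

open MeasureTheory Set ENNReal

/-- Hölder-inequality computation with conjugate exponents `N/p` and `N/(N-p)`
producing the logarithmic factor in the far-field gradient upper bound. -/
theorem holder_log_estimate (N : ℕ) (p : ℝ) (hp : 1 < p) (hpN : p < N)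
    (g : ℝ → ℝ≥0∞) (hg : Measurable g) :
    ∀ r > (1 : ℝ),
      ∫⁻ s in Set.Ioo (1 : ℝ) r, ENNReal.ofReal s ^ (p - 1) * g s ≤
        (∫⁻ s in Set.Ioi (1 : ℝ), ENNReal.ofReal s ^ ((N : ℝ) - 1) * g s ^ ((N : ℝ) / p))
            ^ (p / (N : ℝ)) *
          ENNReal.ofReal (Real.log r) ^ (((N : ℝ) - p) / (N : ℝ)) := by
  intro r hr
  have hp0 : (0:ℝ) < p := lt_trans one_pos hp
  have hN0 : (0:ℝ) < N := lt_trans hp0 hpN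
  have hNp : (0:ℝ) < (N:ℝ) - p := by linarith
  set P : ℝ := (N:ℝ) / p with hP
  set Q : ℝ := (N:ℝ) / ((N:ℝ) - p) with hQ
  have hPQ : P.HolderConjugate Q := by
    rw [Real.holderConjugate_iff_eq_conjExponent (by rw [hP, lt_div_iff₀ hp0]; linarith)]
    rw [hP, hQ]; rw [div_sub_one hp0.ne', div_div_div_cancel_right₀ hp0.ne']
  set f₁ : ℝ → ℝ≥0∞ := fun a => ENNReal.ofReal a ^ (((N:ℝ) - 1) * p / N) * g a with hf₁
  set f₂ : ℝ → ℝ≥0∞ := fun a => ENNReal.ofReal a ^ ((p - (N:ℝ)) / N) with hf₂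
  have hm₁ : Measurable f₁ :=
    ((ENNReal.measurable_ofReal.comp measurable_id).pow_const _).mul hg
  have hm₂ : Measurable f₂ :=
    (ENNReal.measurable_ofReal.comp measurable_id).pow_const _
  have hle := ENNReal.lintegral_mul_le_Lp_mul_Lq (volume.restrict (Ioo (1:ℝ) r)) hPQ
    hm₁.aemeasurable hm₂.aemeasurable
  -- LHS equality
  have hLHS : ∫⁻ s in Ioo (1:ℝ) r, ENNReal.ofReal s ^ (p - 1) * g s
      = ∫⁻ a in Ioo (1:ℝ) r, (f₁ * f₂) a := by
    refine setLIntegral_congr_fun measurableSet_Ioo ?_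
    intro a ha
    have ha0 : (0:ℝ) < a := lt_trans one_pos ha.1
    have hne : ENNReal.ofReal a ≠ 0 := by
      simp [ENNReal.ofReal_eq_zero]; linarith
    simp only [hf₁, hf₂, Pi.mul_apply]
    rw [mul_right_comm, ← ENNReal.rpow_add _ _ hne ENNReal.ofReal_ne_top]
    congr 2
    field_simp
    ring
  -- first factor
  have hF1 : (∫⁻ a in Ioo (1:ℝ) r, f₁ a ^ P) ^ (1 / P)
      ≤ (∫⁻ s in Set.Ioi (1 : ℝ), ENNReal.ofReal s ^ ((N : ℝ) - 1) * g s ^ ((N : ℝ) / p))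
          ^ (p / (N : ℝ)) := by
    have h1P : 1 / P = p / N := by rw [hP, one_div_div]
    rw [h1P]
    refine ENNReal.rpow_le_rpow ?_ (by positivity)
    have heq : ∀ a : ℝ, f₁ a ^ P
        = ENNReal.ofReal a ^ ((N:ℝ) - 1) * g a ^ ((N:ℝ) / p) := by
      intro a
      rw [hf₁]
      simp only []
      rw [ENNReal.mul_rpow_of_nonneg _ _ (by positivity : (0:ℝ) ≤ P),
        ← ENNReal.rpow_mul, hP]
      congr 2
      field_simp
    simp only [heq]
    exact lintegral_mono_set Ioo_subset_Ioi_self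
  -- second factor
  have hF2 : (∫⁻ a in Ioo (1:ℝ) r, f₂ a ^ Q) = ENNReal.ofReal (Real.log r) := by
    have heq : ∀ a ∈ Ioo (1:ℝ) r, f₂ a ^ Q = ENNReal.ofReal a⁻¹ := by
      intro a ha
      have ha0 : (0:ℝ) < a := lt_trans one_pos ha.1
      rw [hf₂]
      simp only []
      rw [← ENNReal.rpow_mul]
      have : (p - (N:ℝ)) / N * Q = -1 := by
        rw [hQ]; field_simp; ring
      rw [this, ENNReal.ofReal_rpow_of_pos ha0, Real.rpow_neg_one]
    rw [setLIntegral_congr_fun measurableSet_Ioo heq]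
    have hint : IntegrableOn (fun a : ℝ => a⁻¹) (Ioo (1:ℝ) r) := by
      refine IntegrableOn.mono_set ?_ Ioo_subset_Icc_self
      refine ContinuousOn.integrableOn_compact isCompact_Icc ?_
      intro x hx
      exact (continuousAt_inv₀ (by linarith [hx.1] : x ≠ 0)).continuousWithinAt
    rw [← ofReal_integral_eq_lintegral_ofReal hint
      ((ae_restrict_mem measurableSet_Ioo).mono fun a ha =>
        inv_nonneg.2 (by linarith [ha.1]))]
    congr 1
    rw [← integral_Ioc_eq_integral_Ioo, ← intervalIntegral.integral_of_le hr.le,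
      integral_inv_of_pos one_pos (lt_trans one_pos hr), div_one]
  have h1Q : 1 / Q = ((N:ℝ) - p) / N := by rw [hQ, one_div_div]
  calc ∫⁻ s in Ioo (1:ℝ) r, ENNReal.ofReal s ^ (p - 1) * g s
      = ∫⁻ a in Ioo (1:ℝ) r, (f₁ * f₂) a := hLHS
    _ ≤ (∫⁻ a in Ioo (1:ℝ) r, f₁ a ^ P) ^ (1 / P) *
        (∫⁻ a in Ioo (1:ℝ) r, f₂ a ^ Q) ^ (1 / Q) := hle
    _ ≤ _ := by
        rw [hF2, h1Q]
        exact mul_le_mul_of_nonneg_right hF1 zero_le
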